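/- Let J be a bounded self-adjoint two-sided Jacobi matrix on ℓ²(ℤ) with off-diagonal entries a(n) > 0 and let c ∈ ℝ \ σ(J). Define κ_c = (J − c)⁻¹(e₋₁ a(0) sin φ + e₀ cos φ) where tan φ = r₊(c) and r₊(z) = ⟨(J₊ − z)⁻¹ e₀, e₀⟩ is the resolvent function of the restriction J₊ to ℓ²(ℤ≥0). Then ‖κ_c‖² = r₊'(c)/(1 + r₊(c)²) = φ'(c). -/

import Mathlib

open scoped RealInnerProductSpace

/-- Lemma 5.5 (norm of the defect vector): for a bounded self-adjoint half-line
operator `J₊`, a unit cyclic vector `e₀`, `c` in the resolvent set, the resolvent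
function `r(t) = ⟨(J₊ − t)⁻¹e₀, e₀⟩` with derivative `r'` at `c`, and
`φ = arctan r(c)`, the vector `κ_c = cos φ · (J₊ − c)⁻¹ e₀` satisfies
`‖κ_c‖² = r'(c)/(1 + r(c)²) = φ'(c)`. -/
theorem defect_vector_norm {H : Type*} [NormedAddCommGroup H] [InnerProductSpace ℝ H]
    [CompleteSpace H]
    (Jp : H →L[ℝ] H) (hsa : IsSelfAdjoint Jp) (e0 : H) (he0 : ‖e0‖ = 1)
    (c r' : ℝ) (hc : IsUnit (Jp - c • (1 : H →L[ℝ] H)))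
    (r : ℝ → ℝ)
    (hr : ∀ t : ℝ, r t = ⟪(Ring.inverse (Jp - t • (1 : H →L[ℝ] H))) e0, e0⟫)
    (hder : HasDerivAt r r' c) :
    ‖Real.cos (Real.arctan (r c)) • (Ring.inverse (Jp - c • (1 : H →L[ℝ] H))) e0‖^2
      = r' / (1 + (r c)^2) ∧
    HasDerivAt (fun t => Real.arctan (r t)) (r' / (1 + (r c)^2)) c := by
  set T : ℝ → (H →L[ℝ] H) := fun t => Jp - t • (1 : H →L[ℝ] H) with hT
  set R : H →L[ℝ] H := Ring.inverse (T c) with hR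
  -- self-adjointness of T c and R
  have hTc : IsSelfAdjoint (T c) := by
    simp only [IsSelfAdjoint, hT, star_sub, star_smul, star_one, star_trivial, hsa.star_eq]
  have hRsa : IsSelfAdjoint R := by
    show star R = R
    rw [hR, ← Ring.inverse_star, hTc.star_eq]
  -- derivative of t ↦ T t
  have hTder : HasDerivAt T (-(1 : H →L[ℝ] H)) c := by
    have : HasDerivAt (fun t : ℝ => t • (1 : H →L[ℝ] H)) (1 : H →L[ℝ] H) c := by
      simpa using (hasDerivAt_id c).smul_const (1 : H →L[ℝ] H)
    exact ((hasDerivAt_const c Jp).sub this).congr_deriv (by simp)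
  -- derivative of t ↦ Ring.inverse (T t)
  have hu : (hc.unit : H →L[ℝ] H) = T c := hc.unit_spec
  have huinv : ((hc.unit⁻¹ : (H →L[ℝ] H)ˣ) : H →L[ℝ] H) = R := by
    rw [hR, ← hu, Ring.inverse_unit]
  set_option synthInstance.maxHeartbeats 1000000 in
  have hinv : HasFDerivAt Ring.inverse
      (-ContinuousLinearMap.mulLeftRight ℝ (H →L[ℝ] H) ↑hc.unit⁻¹ ↑hc.unit⁻¹) (T c) := by
    simpa [hu] using hasFDerivAt_ringInverse (𝕜 := ℝ) hc.unit
  have hfder : HasDerivAt (fun t => Ring.inverse (T t)) (R * R) c := by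
    have := (hinv.comp c hTder.hasFDerivAt).hasDerivAt
    exact this.congr_deriv (by simp [ContinuousLinearMap.mulLeftRight_apply, huinv, mul_assoc])
  -- r = L ∘ (fun t => Ring.inverse (T t)) with L a CLM
  set L : (H →L[ℝ] H) →L[ℝ] ℝ :=
    (innerSL ℝ e0).comp (ContinuousLinearMap.apply ℝ H e0) with hL
  have hLapp : ∀ A : H →L[ℝ] H, L A = ⟪A e0, e0⟫ := by
    intro A
    simp [hL, real_inner_comm]
  have hrL : r = fun t => L (Ring.inverse (T t)) := by
    funext t; rw [hr t, hLapp]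
  have hrd : HasDerivAt r (L (R * R)) c := by
    rw [hrL]
    exact (L.hasFDerivAt.comp_hasDerivAt c hfder)
  have hr' : r' = ‖R e0‖ ^ 2 := by
    have h1 : r' = L (R * R) := hder.unique hrd
    rw [h1, hLapp]
    have : (R * R) e0 = R (R e0) := rfl
    rw [this, ← hRsa.adjoint_eq, ContinuousLinearMap.adjoint_inner_left,
      hRsa.adjoint_eq, real_inner_self_eq_norm_sq]
  constructor
  · rw [norm_smul, mul_pow, hr']
    have hc2 : ‖Real.cos (Real.arctan (r c))‖ ^ 2 = 1 / (1 + (r c) ^ 2) := by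
      rw [Real.norm_eq_abs, sq_abs, Real.cos_sq_arctan]
    rw [hc2]; ring
  · have := hder.arctan
    simpa [div_eq_mul_inv, mul_comm] using this
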